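/- Let p > 3 be a prime and d ∈ F_p with d ≠ −2, d ≠ 0 and d³ ≠ 1, and set k = (4/3)(d² + d + 1) ∈ F_p. Then #{(u, v) ∈ F_p × F_p : u³ + v³ + 1 = 3duv} = #{(x, y) ∈ F_p × F_p : y² = x³ + ((d+2)x + k)² and x ≠ −k}. -/

import Mathlib

set_option maxRecDepth 10000
set_option maxHeartbeats 1000000

theorem hessian_count_eq_tildeE_count (p : ℕ) [Fact p.Prime] (hp : 3 < p)
    (d : ZMod p) (hd2 : d ≠ -2) (hd0 : d ≠ 0) (hd : d ^ 3 ≠ 1)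
    (k : ZMod p) (hk : k = 4 / 3 * (d ^ 2 + d + 1)) :
    (Finset.univ.filter (fun uv : ZMod p × ZMod p =>
        uv.1 ^ 3 + uv.2 ^ 3 + 1 = 3 * d * uv.1 * uv.2)).card =
      (Finset.univ.filter (fun xy : ZMod p × ZMod p =>
        xy.2 ^ 2 = xy.1 ^ 3 + ((d + 2) * xy.1 + k) ^ 2 ∧ xy.1 ≠ -k)).card := by
  have h2 : (2 : ZMod p) ≠ 0 := by
    have : ((2 : ℕ) : ZMod p) ≠ 0 := by
      rw [Ne, ZMod.natCast_eq_zero_iff]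
      intro h
      exact absurd (Nat.le_of_dvd (by norm_num) h) (by omega)
    simpa using this
  have h3 : (3 : ZMod p) ≠ 0 := by
    have : ((3 : ℕ) : ZMod p) ≠ 0 := by
      rw [Ne, ZMod.natCast_eq_zero_iff]
      intro h
      exact absurd (Nat.le_of_dvd (by norm_num) h) (by omega)
    simpa using this
  have h4 : (4 : ZMod p) ≠ 0 := by
    intro h
    exact h2 (mul_self_eq_zero.mp (by linear_combination h))
  have hd1 : d - 1 ≠ 0 := by
    intro h
    apply hd
    have : d = 1 := by linear_combination h
    rw [this]; ring
  have hsum : d ^ 2 + d + 1 ≠ 0 := by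
    intro h
    apply hd
    linear_combination (d - 1) * h
  have hk0 : k ≠ 0 := by
    rw [hk]
    exact mul_ne_zero (div_ne_zero h4 h3) hsum
  have hkd : k * (d - 1) ≠ 0 := mul_ne_zero hk0 hd1
  have hden1 : ∀ u v : ZMod p, u ^ 3 + v ^ 3 + 1 = 3 * d * u * v → u + v + d ≠ 0 := by
    intro u v huv h0
    apply hd
    linear_combination (u ^ 2 + v ^ 2 + d ^ 2 - u * v - u * d - v * d) * h0 - huv
  apply Finset.card_nbij'
    (i := fun uv : ZMod p × ZMod p =>
      (-k * (uv.1 + uv.2 + 1) / (uv.1 + uv.2 + d),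
       k * (d - 1) * (uv.1 - uv.2) / (uv.1 + uv.2 + d)))
    (j := fun xy : ZMod p × ZMod p =>
      ((xy.2 - xy.1 * d - k) / (2 * (xy.1 + k)),
       (-xy.2 - xy.1 * d - k) / (2 * (xy.1 + k))))
  · -- forward map lands in target
    rintro ⟨u, v⟩ hm
    simp only [Finset.mem_coe, Finset.mem_filter, Finset.mem_univ, true_and] at hm ⊢
    have hsd : u + v + d ≠ 0 := hden1 u v hm
    constructor
    · subst hk
      field_simp
      linear_combination (4 * (d - 1) ^ 2 * (d * (d + 1) + 1) ^ 2) * hm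
    · intro h
      have h' : -k * (u + v + 1) = -k * (u + v + d) := by
        have := (div_eq_iff hsd).mp h
        linear_combination this
      have hz : k * (d - 1) = 0 := by linear_combination h'
      exact hkd hz
  · -- backward map lands in source
    rintro ⟨x, y⟩ hm
    simp only [Finset.mem_coe, Finset.mem_filter, Finset.mem_univ, true_and] at hm ⊢
    obtain ⟨hxy, hx⟩ := hm
    have hxk : x + k ≠ 0 := fun h => hx (by linear_combination h)
    have hx3 : x * 3 + 4 * (d ^ 2 + d + 1) ≠ 0 := by
      intro h
      apply hxk
      rw [hk]
      field_simp
      linear_combination h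
    subst hk
    field_simp at hxy
    have hx3' : x * 3 + 4 * (d * (d + 1) + 1) ≠ 0 := by
      intro h; apply hx3; linear_combination h
    field_simp [hx3]
    field_simp [hx3']
    linear_combination (24 * (d - 1) * (d * (d + 1) + 1)) * hxy
  · -- left inverse
    rintro ⟨u, v⟩ hm
    simp only [Finset.mem_coe, Finset.mem_filter, Finset.mem_univ, true_and] at hm
    have hsd : u + v + d ≠ 0 := hden1 u v hm
    have hxk : -k * (u + v + 1) / (u + v + d) + k ≠ 0 := by
      have he : -k * (u + v + 1) / (u + v + d) + k = k * (d - 1) / (u + v + d) := by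
        field_simp
        ring
      rw [he]
      exact div_ne_zero hkd hsd
    refine Prod.ext ?_ ?_
    · show (k * (d - 1) * (u - v) / (u + v + d) - -k * (u + v + 1) / (u + v + d) * d - k) /
        (2 * (-k * (u + v + 1) / (u + v + d) + k)) = u
      rw [div_eq_iff (mul_ne_zero h2 hxk)]
      field_simp
      ring
    · show (-(k * (d - 1) * (u - v) / (u + v + d)) - -k * (u + v + 1) / (u + v + d) * d - k) /
        (2 * (-k * (u + v + 1) / (u + v + d) + k)) = v
      rw [div_eq_iff (mul_ne_zero h2 hxk)]
      field_simp
      ring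
  · -- right inverse
    rintro ⟨x, y⟩ hm
    simp only [Finset.mem_coe, Finset.mem_filter, Finset.mem_univ, true_and] at hm
    obtain ⟨hxy, hx⟩ := hm
    have hxk : x + k ≠ 0 := fun h => hx (by linear_combination h)
    have hs : (y - x * d - k) / (2 * (x + k)) + (-y - x * d - k) / (2 * (x + k)) + d ≠ 0 := by
      have he : (y - x * d - k) / (2 * (x + k)) + (-y - x * d - k) / (2 * (x + k)) + d
          = k * (d - 1) / (x + k) := by
        field_simp
        ring
      rw [he]
      exact div_ne_zero hkd hxk
    refine Prod.ext ?_ ?_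
    · show -k * ((y - x * d - k) / (2 * (x + k)) + (-y - x * d - k) / (2 * (x + k)) + 1) /
        ((y - x * d - k) / (2 * (x + k)) + (-y - x * d - k) / (2 * (x + k)) + d) = x
      rw [div_eq_iff hs]
      field_simp
      ring
    · show k * (d - 1) * ((y - x * d - k) / (2 * (x + k)) - (-y - x * d - k) / (2 * (x + k))) /
        ((y - x * d - k) / (2 * (x + k)) + (-y - x * d - k) / (2 * (x + k)) + d) = y
      rw [div_eq_iff hs]
      field_simp
      ring
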